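/- Under Assumption 1.1 there exists a constant K_τ > 0 such that for all sufficiently large x, x^{2-τ-K_τ(log x)^{γ-1}} ≤ 1 - G(x) ≤ x^{2-τ+K_τ(log x)^{γ-1}}. -/

import Mathlib

open scoped BigOperators

/-- Abel-type identity in `ℝ≥0∞`. -/
lemma aux_abel (b : ℕ → ENNReal) :
    ∑' k : ℕ, (k : ENNReal) * b k = ∑' m : ℕ, ∑' k : ℕ, b (k + m + 1) := by
  have h1 : ∀ k : ℕ, (k : ENNReal) * b k = ∑' m : ℕ, if m < k then b k else 0 := by
    intro k
    rw [tsum_eq_sum (s := Finset.range k)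
      (by intro m hm; simp only [Finset.mem_range] at hm; simp [hm])]
    rw [Finset.sum_ite_of_true (fun m hm => Finset.mem_range.1 hm)]
    simp [mul_comm]
  calc ∑' k : ℕ, (k : ENNReal) * b k
      = ∑' (k : ℕ) (m : ℕ), if m < k then b k else 0 := tsum_congr h1
    _ = ∑' (m : ℕ) (k : ℕ), if m < k then b k else 0 := ENNReal.tsum_comm
    _ = ∑' m : ℕ, ∑' k : ℕ, b (k + m + 1) := by
        refine tsum_congr fun m => ?_
        have hinj : Function.Injective (fun k : ℕ => k + m + 1) := fun x y h => by simp only at h; omega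
        have hsupp : Function.support (fun k : ℕ => if m < k then b k else 0)
            ⊆ Set.range (fun k : ℕ => k + m + 1) := by
          intro k hk
          simp only [Function.mem_support, ne_eq, ite_eq_right_iff, not_forall] at hk
          obtain ⟨hmk, -⟩ := hk
          exact ⟨k - m - 1, by simp only; omega⟩
        have := hinj.tsum_eq (f := fun k : ℕ => if m < k then b k else 0) hsupp
        rw [← this]
        refine tsum_congr fun k => ?_
        have hlt : m < k + m + 1 := by omega
        simp [hlt]

/-- convexity/MVT bound. -/
lemma aux_mvt {β a b : ℝ} (hβ : 1 < β) (ha : 0 < a) (hab : a < b) :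
    (β - 1) * b ^ (-β) * (b - a) ≤ a ^ (1 - β) - b ^ (1 - β) := by
  have hb : (0:ℝ) < b := ha.trans hab
  have hcont : ContinuousOn (fun t : ℝ => t ^ (1 - β)) (Set.Icc a b) := by
    intro t ht
    exact (Real.continuousAt_rpow_const t _
      (Or.inl (ne_of_gt (lt_of_lt_of_le ha ht.1)))).continuousWithinAt
  have hderiv : ∀ t ∈ Set.Ioo a b,
      HasDerivAt (fun t : ℝ => t ^ (1 - β)) ((1 - β) * t ^ (-β)) t := by
    intro t ht
    have h := Real.hasDerivAt_rpow_const (x := t) (p := 1 - β) (Or.inl (ne_of_gt (ha.trans ht.1)))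
    have he : (1 : ℝ) - β - 1 = -β := by ring
    rw [he] at h
    exact h
  obtain ⟨c, hc, hceq⟩ := exists_hasDerivAt_eq_slope _ _ hab hcont hderiv
  have hc0 : 0 < c := ha.trans hc.1
  have key : b ^ (1 - β) - a ^ (1 - β) = (1 - β) * c ^ (-β) * (b - a) := by
    rw [hceq, div_mul_cancel₀ _ (ne_of_gt (sub_pos.2 hab))]
  have hcb : b ^ (-β) ≤ c ^ (-β) := Real.rpow_le_rpow_of_nonpos hc0 hc.2.le (by linarith)
  have hmul : (β - 1) * (b - a) * (b ^ (-β)) ≤ (β - 1) * (b - a) * (c ^ (-β)) := by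
    apply mul_le_mul_of_nonneg_left hcb
    nlinarith
  nlinarith [key, hmul]

lemma abel_bound (f : ℕ → ℝ) (hf_nonneg : ∀ j, 0 ≤ f j) (hSf : Summable f)
    (hμ_sum : Summable fun j : ℕ => (j : ℝ) * f j)
    (n : ℕ) (Lb : ℝ) (hLb0 : 0 ≤ Lb) (r : ℕ → ℝ)
    (hr : ∀ m : ℕ, (∑' k : ℕ, f (k + (n + m + 2))) ≤ r m)
    (hrs : ∀ N : ℕ, ∑ m ∈ Finset.range N, r m ≤ Lb) :
    (∑' k : ℕ, ((k + (n + 1) : ℕ) : ℝ) * f (k + (n + 1)))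
      ≤ ((n : ℝ) + 1) * (∑' k : ℕ, f (k + (n + 1))) + Lb := by
  have hS1 : Summable (fun k : ℕ => ((k + (n + 1) : ℕ) : ℝ) * f (k + (n + 1))) :=
    (summable_nat_add_iff (f := fun j : ℕ => (j : ℝ) * f j) (n + 1)).2 hμ_sum
  have hSa : Summable (fun k : ℕ => f (k + (n + 1))) := (summable_nat_add_iff (f := f) (n + 1)).2 hSf
  set b : ℕ → ENNReal := fun k => ENNReal.ofReal (f (k + (n + 1))) with hb
  have hof : ENNReal.ofReal (∑' k : ℕ, ((k + (n + 1) : ℕ) : ℝ) * f (k + (n + 1)))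
      = ∑' k : ℕ, ENNReal.ofReal (((k + (n + 1) : ℕ) : ℝ) * f (k + (n + 1))) :=
    ENNReal.ofReal_tsum_of_nonneg (fun k => mul_nonneg (Nat.cast_nonneg _) (hf_nonneg _)) hS1
  have hterm : ∀ k : ℕ, ENNReal.ofReal (((k + (n + 1) : ℕ) : ℝ) * f (k + (n + 1)))
      = ((n : ENNReal) + 1) * b k + (k : ENNReal) * b k := by
    intro k
    rw [ENNReal.ofReal_mul (Nat.cast_nonneg _), ENNReal.ofReal_natCast]
    push_cast
    ring
  have hsplit : (∑' k : ℕ, ENNReal.ofReal (((k + (n + 1) : ℕ) : ℝ) * f (k + (n + 1))))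
      = ((n : ENNReal) + 1) * (∑' k, b k) + ∑' m : ℕ, ∑' k : ℕ, b (k + m + 1) := by
    rw [tsum_congr hterm, ENNReal.tsum_add, ENNReal.tsum_mul_left, aux_abel]
  have hSb : (∑' k, b k) = ENNReal.ofReal (∑' k : ℕ, f (k + (n + 1))) :=
    (ENNReal.ofReal_tsum_of_nonneg (fun k => hf_nonneg _) hSa).symm
  have htail : ∀ m : ℕ, (∑' k : ℕ, b (k + m + 1)) ≤ ENNReal.ofReal (r m) := by
    intro m
    have h2 : ∀ k : ℕ, b (k + m + 1) = ENNReal.ofReal (f (k + (n + m + 2))) := by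
      intro k
      simp only [hb]
      congr 2
      omega
    have h1 : (∑' k : ℕ, b (k + m + 1)) = ENNReal.ofReal (∑' k : ℕ, f (k + (n + m + 2))) := by
      rw [tsum_congr h2]
      exact (ENNReal.ofReal_tsum_of_nonneg (fun k => hf_nonneg _)
        ((summable_nat_add_iff (f := f) (n + m + 2)).2 hSf)).symm
    rw [h1]
    exact ENNReal.ofReal_le_ofReal (hr m)
  have hr0 : ∀ m, 0 ≤ r m := fun m => le_trans (tsum_nonneg fun k => hf_nonneg _) (hr m)
  have htails : (∑' m : ℕ, ∑' k : ℕ, b (k + m + 1)) ≤ ENNReal.ofReal Lb := by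
    calc ∑' m : ℕ, ∑' k : ℕ, b (k + m + 1) ≤ ∑' m : ℕ, ENNReal.ofReal (r m) :=
          ENNReal.tsum_le_tsum htail
      _ ≤ ENNReal.ofReal Lb := by
          rw [ENNReal.tsum_eq_iSup_nat]
          refine iSup_le fun N => ?_
          rw [← ENNReal.ofReal_sum_of_nonneg (fun i _ => hr0 i)]
          exact ENNReal.ofReal_le_ofReal (hrs N)
  have hS0 : 0 ≤ ∑' k : ℕ, f (k + (n + 1)) := tsum_nonneg fun k => hf_nonneg _
  have hfinal : ENNReal.ofReal (∑' k : ℕ, ((k + (n + 1) : ℕ) : ℝ) * f (k + (n + 1)))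
      ≤ ENNReal.ofReal (((n : ℝ) + 1) * (∑' k : ℕ, f (k + (n + 1))) + Lb) := by
    rw [hof, hsplit, hSb]
    calc ((n : ENNReal) + 1) * ENNReal.ofReal (∑' k : ℕ, f (k + (n + 1)))
          + ∑' m : ℕ, ∑' k : ℕ, b (k + m + 1)
        ≤ ((n : ENNReal) + 1) * ENNReal.ofReal (∑' k : ℕ, f (k + (n + 1)))
          + ENNReal.ofReal Lb := add_le_add le_rfl htails
      _ = ENNReal.ofReal (((n : ℝ) + 1) * (∑' k : ℕ, f (k + (n + 1))) + Lb) := by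
          rw [ENNReal.ofReal_add (mul_nonneg (by positivity) hS0) hLb0,
            ENNReal.ofReal_mul (by positivity)]
          congr 1
          rw [ENNReal.ofReal_add (by positivity) zero_le_one, ENNReal.ofReal_natCast,
            ENNReal.ofReal_one]
  exact (ENNReal.ofReal_le_ofReal_iff
    (add_nonneg (mul_nonneg (by positivity) hS0) hLb0)).1 hfinal

set_option maxHeartbeats 2000000 in
/-- Under Assumption 1.1 there exists `K_τ > 0` such that for all sufficiently large `x`,
`x^(2-τ-K_τ(log x)^(γ-1)) ≤ 1 - G(x) ≤ x^(2-τ+K_τ(log x)^(γ-1))`. -/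
theorem stmt_0
    (f : ℕ → ℝ) (τ γ C : ℝ)
    (hf_nonneg : ∀ j, 0 ≤ f j) (hf0 : f 0 = 0)
    (hf_sum : ∑' j : ℕ, f j = 1)
    (hτ1 : 2 < τ) (hτ2 : τ < 3) (hγ1 : 0 ≤ γ) (hγ2 : γ < 1) (hC : 0 < C)
    (hμ_sum : Summable fun j : ℕ => (j : ℝ) * f j)
    (μ : ℝ) (hμ : μ = ∑' j : ℕ, (j : ℝ) * f j)
    (F G : ℝ → ℝ)
    (hF : ∀ x, F x = ∑ j ∈ Finset.Icc 1 ⌊x⌋₊, f j)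
    (hG : ∀ x, G x = ∑ j ∈ Finset.range (⌊x⌋₊ + 1), ((j : ℝ) + 1) * f (j + 1) / μ)
    (hass : ∃ x₀ : ℝ, 1 < x₀ ∧ ∀ x : ℝ, x₀ ≤ x →
      x ^ (-(τ - 1) - C * Real.log x ^ (γ - 1)) ≤ 1 - F x ∧
      1 - F x ≤ x ^ (-(τ - 1) + C * Real.log x ^ (γ - 1))) :
    ∃ K : ℝ, 0 < K ∧ ∃ x₁ : ℝ, 1 < x₁ ∧ ∀ x : ℝ, x₁ ≤ x →
      x ^ (2 - τ - K * Real.log x ^ (γ - 1)) ≤ 1 - G x ∧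
      1 - G x ≤ x ^ (2 - τ + K * Real.log x ^ (γ - 1)) := by
  obtain ⟨x₀, hx₀1, hx₀⟩ := hass
  -- summability facts
  have hSf1 : Summable (fun j : ℕ => f (j + 1)) := by
    refine Summable.of_nonneg_of_le (fun j => hf_nonneg _) (fun j => ?_)
      ((summable_nat_add_iff (f := fun j : ℕ => (j : ℝ) * f j) 1).2 hμ_sum)
    exact le_mul_of_one_le_left (hf_nonneg _) (by push_cast; linarith)
  have hSf : Summable f := (summable_nat_add_iff (f := f) 1).1 hSf1
  have hμ1 : (1 : ℝ) ≤ μ := by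
    rw [hμ, ← hf_sum]
    refine Summable.tsum_le_tsum (fun j => ?_) hSf hμ_sum
    match j with
    | 0 => simp [hf0]
    | (j + 1) => exact le_mul_of_one_le_left (hf_nonneg _) (by push_cast; linarith)
  have hμ0 : (0 : ℝ) < μ := by linarith
  -- tail of F
  have htailF : ∀ p : ℕ, 1 - F p = ∑' k : ℕ, f (k + (p + 1)) := by
    intro p
    have hFp : F p = ∑ j ∈ Finset.range (p + 1), f j := by
      rw [hF, Nat.floor_natCast]
      have hins : Finset.range (p + 1) = insert 0 (Finset.Icc 1 p) := by
        ext i; simp only [Finset.mem_range, Finset.mem_insert, Finset.mem_Icc]; omega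
      rw [hins, Finset.sum_insert (by simp), hf0, zero_add]
    have hs := Summable.sum_add_tsum_nat_add (f := f) (p + 1) hSf
    rw [hf_sum] at hs
    rw [hFp]
    linarith [hs]
  -- constants
  have hδ0 : (0 : ℝ) < (τ - 2) / 2 := by linarith
  set δ : ℝ := (τ - 2) / 2 with hδdef
  set A : ℝ := 2 + 1 / δ with hAdef
  have hA2 : (2 : ℝ) ≤ A := by
    rw [hAdef]
    have : (0 : ℝ) ≤ 1 / δ := by positivity
    linarith
  have hA0 : (0 : ℝ) < A := by linarith
  have hlogA0 : 0 ≤ Real.log A := Real.log_nonneg (by linarith)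
  have hlogμ0 : 0 ≤ Real.log μ := Real.log_nonneg hμ1
  set E : ℝ := max 1 ((C / δ) ^ ((1 : ℝ) / (1 - γ))) with hEdef
  have hE1 : (1 : ℝ) ≤ E := le_max_left _ _
  set K : ℝ := 2 * C + Real.log μ + τ + Real.log A + 10 with hKdef
  have hK0 : 0 < K := by linarith
  refine ⟨K, hK0, max x₀ (Real.exp (1 + E)), lt_of_lt_of_le hx₀1 (le_max_left _ _), ?_⟩
  intro x hx
  have hxx₀ : x₀ ≤ x := le_trans (le_max_left _ _) hx
  have hxe : Real.exp (1 + E) ≤ x := le_trans (le_max_right _ _) hx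
  have hx0 : (0 : ℝ) < x := lt_of_lt_of_le (Real.exp_pos _) hxe
  set u : ℝ := Real.log x with hudef
  have huE : 1 + E ≤ u := by
    rw [hudef, ← Real.log_exp (1 + E)]
    exact Real.log_le_log (Real.exp_pos _) hxe
  have hu1 : (1 : ℝ) ≤ u := by linarith
  have hx1 : (1 : ℝ) ≤ x := by
    have := Real.add_one_le_exp (E : ℝ)
    nlinarith [Real.exp_pos (1 + E), Real.add_one_le_exp (1 + E)]
  set n : ℕ := ⌊x⌋₊ + 1 with hndef
  have hxn : x < (n : ℝ) := by
    rw [hndef]; push_cast; exact Nat.lt_floor_add_one x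
  have hnn : (n : ℝ) ≤ 2 * x := by
    rw [hndef]; push_cast
    have := Nat.floor_le hx0.le
    linarith
  have hn0 : (0 : ℝ) < (n : ℝ) := lt_trans hx0 hxn
  set L : ℝ := Real.log (n : ℝ) with hLdef
  have huL : u ≤ L := Real.log_le_log hx0 hxn.le
  have hL1 : (1 : ℝ) ≤ L := le_trans hu1 huL
  have hL0 : (0 : ℝ) < L := by linarith
  have hLu : L ≤ Real.log 2 + u := by
    rw [hLdef, hudef, ← Real.log_mul (by norm_num) (ne_of_gt hx0)]
    exact Real.log_le_log hn0 hnn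
  have hlog2 : Real.log 2 ≤ 1 := by
    have := Real.log_two_lt_d9; linarith
  have hlog2' : 0 ≤ Real.log 2 := Real.log_nonneg (by norm_num)
  have hL2u : L ≤ 2 * u := by linarith
  -- rpow facts
  have huγ1 : (1 : ℝ) ≤ u ^ γ := Real.one_le_rpow hu1 hγ1
  have huγLγ : u ^ γ ≤ L ^ γ := Real.rpow_le_rpow (by linarith) huL hγ1
  have hLγ2 : L ^ γ ≤ 2 * u ^ γ := by
    have h2γ : (2 : ℝ) ^ γ ≤ 2 := by
      calc (2 : ℝ) ^ γ ≤ 2 ^ (1 : ℝ) := Real.rpow_le_rpow_of_exponent_le one_le_two hγ2.le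
        _ = 2 := Real.rpow_one 2
    calc L ^ γ ≤ (2 * u) ^ γ := Real.rpow_le_rpow (by linarith) hL2u hγ1
      _ = 2 ^ γ * u ^ γ := Real.mul_rpow (by norm_num) (by linarith)
      _ ≤ 2 * u ^ γ := by
          have huγ0 : (0 : ℝ) ≤ u ^ γ := Real.rpow_nonneg (by linarith) γ
          nlinarith
  have hCL : C * L ^ (γ - 1) ≤ δ := by
    have hCδ : (0 : ℝ) < C / δ := div_pos hC hδ0
    have hM : (C / δ) ^ ((1 : ℝ) / (1 - γ)) ≤ L :=
      le_trans (le_max_right 1 _) (by rw [← hEdef]; linarith)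
    have hMpos : (0 : ℝ) < (C / δ) ^ ((1 : ℝ) / (1 - γ)) := Real.rpow_pos_of_pos hCδ _
    have h1 : L ^ (γ - 1) ≤ ((C / δ) ^ ((1 : ℝ) / (1 - γ))) ^ (γ - 1) :=
      Real.rpow_le_rpow_of_nonpos hMpos hM (by linarith)
    have h2 : ((C / δ) ^ ((1 : ℝ) / (1 - γ))) ^ (γ - 1) = δ / C := by
      rw [← Real.rpow_mul hCδ.le]
      have hne : (1 : ℝ) - γ ≠ 0 := by linarith
      have hexp : (1 : ℝ) / (1 - γ) * (γ - 1) = -1 := by field_simp; ring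
      rw [hexp, Real.rpow_neg_one, inv_div]
    have h3 := mul_le_mul_of_nonneg_left (h1.trans_eq h2) hC.le
    calc C * L ^ (γ - 1) ≤ C * (δ / C) := h3
      _ = δ := by field_simp
  have hLγid : L ^ (γ - 1) * L = L ^ γ := by
    have h := Real.rpow_add_one (ne_of_gt hL0) (γ - 1)
    rw [sub_add_cancel] at h
    exact h.symm
  have huγid : u ^ (γ - 1) * u = u ^ γ := by
    have h := Real.rpow_add_one (by linarith : u ≠ 0) (γ - 1)
    rw [sub_add_cancel] at h
    exact h.symm
  -- tail sums
  set T : ℝ := ∑' k : ℕ, ((k + (n + 1) : ℕ) : ℝ) * f (k + (n + 1)) with hTdef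
  have hS1 : Summable (fun k : ℕ => ((k + (n + 1) : ℕ) : ℝ) * f (k + (n + 1))) :=
    (summable_nat_add_iff (f := fun j : ℕ => (j : ℝ) * f j) (n + 1)).2 hμ_sum
  have hSa : Summable (fun k : ℕ => f (k + (n + 1))) := (summable_nat_add_iff (f := f) (n + 1)).2 hSf
  have hμT : μ = (∑ i ∈ Finset.range (n + 1), (i : ℝ) * f i) + T := by
    have hs := Summable.sum_add_tsum_nat_add (f := fun j : ℕ => (j : ℝ) * f j) (n + 1) hμ_sum
    rw [hμ]; exact hs.symm
  have hGx : 1 - G x = T / μ := by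
    rw [hG]
    have hfl : ⌊x⌋₊ + 1 = n := hndef.symm
    rw [hfl, ← Finset.sum_div]
    have hP : ∑ j ∈ Finset.range n, ((j : ℝ) + 1) * f (j + 1)
        = ∑ i ∈ Finset.range (n + 1), (i : ℝ) * f i := by
      rw [Finset.sum_range_succ' (fun i : ℕ => (i : ℝ) * f i) n]
      push_cast
      simp [hf0]
    have hPμ : ∑ j ∈ Finset.range n, ((j : ℝ) + 1) * f (j + 1) = μ - T := by
      rw [hP]; linarith [hμT]
    rw [hPμ]
    field_simp
    ring
  have hT0 : 0 ≤ T := tsum_nonneg fun k => mul_nonneg (Nat.cast_nonneg _) (hf_nonneg _)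
  -- apply assumption at n
  have hFn := hx₀ (n : ℝ) (le_trans hxx₀ hxn.le)
  rw [← hLdef] at hFn
  have htFn : 1 - F (n : ℝ) = ∑' k : ℕ, f (k + (n + 1)) := htailF n
  -- LOWER BOUND
  have hTlow : (n : ℝ) * (1 - F (n : ℝ)) ≤ T := by
    rw [htFn, ← tsum_mul_left]
    refine Summable.tsum_le_tsum (fun k => ?_) (Summable.mul_left _ hSa) hS1
    exact mul_le_mul_of_nonneg_right (by push_cast; linarith) (hf_nonneg _)
  have hneu : (n : ℝ) = Real.exp L := (Real.exp_log hn0).symm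
  have hrwn : (n : ℝ) ^ (-(τ - 1) - C * L ^ (γ - 1)) = Real.exp ((2 - τ) * L - C * L ^ γ - L) := by
    rw [Real.rpow_def_of_pos hn0, ← hLdef]
    congr 1
    have : L * (-(τ - 1) - C * L ^ (γ - 1)) = (2 - τ) * L - C * (L ^ (γ - 1) * L) - L := by ring
    rw [this, hLγid]
  have hlow1 : Real.exp ((2 - τ) * L - C * L ^ γ) ≤ (n : ℝ) * (1 - F (n : ℝ)) := by
    calc Real.exp ((2 - τ) * L - C * L ^ γ)
        = Real.exp L * Real.exp ((2 - τ) * L - C * L ^ γ - L) := by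
          rw [← Real.exp_add]; congr 1; ring
      _ = (n : ℝ) * (n : ℝ) ^ (-(τ - 1) - C * L ^ (γ - 1)) := by rw [hrwn, hneu]
      _ ≤ (n : ℝ) * (1 - F (n : ℝ)) := mul_le_mul_of_nonneg_left hFn.1 hn0.le
  have hlhs : x ^ (2 - τ - K * u ^ (γ - 1)) = Real.exp ((2 - τ) * u - K * u ^ γ) := by
    rw [Real.rpow_def_of_pos hx0, ← hudef]
    congr 1
    have : u * (2 - τ - K * u ^ (γ - 1)) = (2 - τ) * u - K * (u ^ (γ - 1) * u) := by ring
    rw [this, huγid]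
  have hK2C : 0 ≤ K - 2 * C := by rw [hKdef]; linarith
  have e1 : (τ - 2) * L ≤ (τ - 2) * (Real.log 2 + u) :=
    mul_le_mul_of_nonneg_left hLu (by linarith)
  have e2 : C * L ^ γ ≤ C * (2 * u ^ γ) := mul_le_mul_of_nonneg_left hLγ2 hC.le
  have e3 : (K - 2 * C) * 1 ≤ (K - 2 * C) * u ^ γ := mul_le_mul_of_nonneg_left huγ1 hK2C
  have e4 : (τ - 2) * Real.log 2 ≤ (τ - 2) * 1 := mul_le_mul_of_nonneg_left hlog2 (by linarith)
  have hlin1 : (2 - τ) * u - K * u ^ γ ≤ (2 - τ) * L - C * L ^ γ - Real.log μ := by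
    linarith [e1, e2, e3, e4, hlogA0]
  have hlower : x ^ (2 - τ - K * u ^ (γ - 1)) ≤ 1 - G x := by
    rw [hGx, hlhs]
    have h1 : Real.exp ((2 - τ) * u - K * u ^ γ)
        ≤ Real.exp ((2 - τ) * L - C * L ^ γ - Real.log μ) := Real.exp_le_exp.2 hlin1
    have h2 : Real.exp ((2 - τ) * L - C * L ^ γ - Real.log μ)
        = Real.exp ((2 - τ) * L - C * L ^ γ) / μ := by
      rw [Real.exp_sub, Real.exp_log hμ0]
    calc Real.exp ((2 - τ) * u - K * u ^ γ)
        ≤ Real.exp ((2 - τ) * L - C * L ^ γ) / μ := by rw [← h2]; exact h1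
      _ ≤ ((n : ℝ) * (1 - F (n : ℝ))) / μ := by gcongr
      _ ≤ T / μ := by gcongr
  -- UPPER BOUND
  set β : ℝ := (τ - 1) - C * L ^ (γ - 1) with hβdef
  have hδτ : τ - 2 = 2 * δ := by rw [hδdef]; ring
  have hβ1 : 1 + δ ≤ β := by rw [hβdef]; linarith [hCL, hδτ]
  have hβgt : 1 < β := by linarith
  have hr' : ∀ m : ℕ, (∑' k : ℕ, f (k + (n + m + 2))) ≤ ((n : ℝ) + m + 1) ^ (-β) := by
    intro m
    have hidx : ∀ k : ℕ, k + (n + m + 2) = k + ((n + m + 1) + 1) := by omega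
    have hp : (∑' k : ℕ, f (k + (n + m + 2))) = 1 - F ((n + m + 1 : ℕ) : ℝ) := by
      rw [tsum_congr (fun k => by rw [hidx k])]
      exact (htailF (n + m + 1)).symm
    have hcast : ((n + m + 1 : ℕ) : ℝ) = (n : ℝ) + m + 1 := by push_cast; ring
    have hm0 : (0 : ℝ) ≤ (m : ℝ) := Nat.cast_nonneg m
    have hx₀' : x₀ ≤ ((n + m + 1 : ℕ) : ℝ) := by
      rw [hcast]; linarith [hxn]
    have hup := (hx₀ _ hx₀').2
    have hbase1 : (1 : ℝ) ≤ ((n + m + 1 : ℕ) : ℝ) := by rw [hcast]; linarith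
    have hlogm : L ≤ Real.log ((n + m + 1 : ℕ) : ℝ) := by
      rw [hLdef]
      exact Real.log_le_log hn0 (by rw [hcast]; linarith)
    have hmono : (Real.log ((n + m + 1 : ℕ) : ℝ)) ^ (γ - 1) ≤ L ^ (γ - 1) :=
      Real.rpow_le_rpow_of_nonpos hL0 hlogm (by linarith)
    have hexp : -(τ - 1) + C * (Real.log ((n + m + 1 : ℕ) : ℝ)) ^ (γ - 1) ≤ -β := by
      have := mul_le_mul_of_nonneg_left hmono hC.le
      rw [hβdef]; linarith
    calc (∑' k : ℕ, f (k + (n + m + 2)))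
        = 1 - F ((n + m + 1 : ℕ) : ℝ) := hp
      _ ≤ ((n + m + 1 : ℕ) : ℝ) ^ (-(τ - 1) + C * (Real.log ((n + m + 1 : ℕ) : ℝ)) ^ (γ - 1)) :=
          hup
      _ ≤ ((n + m + 1 : ℕ) : ℝ) ^ (-β) := Real.rpow_le_rpow_of_exponent_le hbase1 hexp
      _ = ((n : ℝ) + m + 1) ^ (-β) := by rw [hcast]
  set Lb : ℝ := (n : ℝ) ^ (1 - β) / δ with hLbdef
  have hLb0 : 0 ≤ Lb := by
    rw [hLbdef]
    exact div_nonneg (Real.rpow_nonneg hn0.le _) hδ0.le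
  have hrs' : ∀ N : ℕ, ∑ m ∈ Finset.range N, ((n : ℝ) + m + 1) ^ (-β) ≤ Lb := by
    intro N
    have hstep : ∀ m : ℕ, ((n : ℝ) + m + 1) ^ (-β)
        ≤ (((n : ℝ) + m) ^ (1 - β) - ((n : ℝ) + (m + 1 : ℕ)) ^ (1 - β)) / (β - 1) := by
      intro m
      have hm0 : (0 : ℝ) ≤ (m : ℝ) := Nat.cast_nonneg m
      have hpos : (0 : ℝ) < (n : ℝ) + m := by linarith
      have hlt : (n : ℝ) + m < (n : ℝ) + m + 1 := lt_add_one _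
      have h := aux_mvt hβgt hpos hlt
      have hc : ((n : ℝ) + (m + 1 : ℕ)) = (n : ℝ) + m + 1 := by push_cast; ring
      rw [hc]
      rw [le_div_iff₀ (by linarith : (0:ℝ) < β - 1)]
      have h2 : ((n : ℝ) + m + 1) - ((n : ℝ) + m) = 1 := by ring
      rw [h2, mul_one] at h
      linarith [h]
    calc ∑ m ∈ Finset.range N, ((n : ℝ) + m + 1) ^ (-β)
        ≤ ∑ m ∈ Finset.range N,
            ((((n : ℝ) + m) ^ (1 - β) - ((n : ℝ) + (m + 1 : ℕ)) ^ (1 - β)) / (β - 1)) :=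
          Finset.sum_le_sum fun m _ => hstep m
      _ = (∑ m ∈ Finset.range N,
            (((n : ℝ) + m) ^ (1 - β) - ((n : ℝ) + (m + 1 : ℕ)) ^ (1 - β))) / (β - 1) := by
          rw [Finset.sum_div]
      _ = (((n : ℝ) + (0 : ℕ)) ^ (1 - β) - ((n : ℝ) + (N : ℕ)) ^ (1 - β)) / (β - 1) := by
          rw [Finset.sum_range_sub' (fun m : ℕ => ((n : ℝ) + m) ^ (1 - β)) N]
      _ ≤ Lb := by
          rw [hLbdef]
          have h1 : (0 : ℝ) ≤ ((n : ℝ) + (N : ℕ)) ^ (1 - β) :=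
            Real.rpow_nonneg (by positivity) _
          have h2 : ((n : ℝ) + (0 : ℕ)) ^ (1 - β) = (n : ℝ) ^ (1 - β) := by norm_num
          rw [h2]
          have h4 : (0 : ℝ) < β - 1 := by linarith
          calc ((n : ℝ) ^ (1 - β) - ((n : ℝ) + (N : ℕ)) ^ (1 - β)) / (β - 1)
              ≤ (n : ℝ) ^ (1 - β) / (β - 1) := by gcongr <;> linarith
            _ ≤ (n : ℝ) ^ (1 - β) / δ := by
                apply div_le_div_of_nonneg_left (Real.rpow_nonneg hn0.le _) hδ0
                linarith
  have hTup := abel_bound f hf_nonneg hSf hμ_sum n Lb hLb0 _ hr' hrs'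
  rw [← hTdef, ← htFn] at hTup
  -- numeric upper bound
  have hrwn2 : (n : ℝ) ^ (-(τ - 1) + C * L ^ (γ - 1)) = Real.exp ((2 - τ) * L + C * L ^ γ - L) := by
    rw [Real.rpow_def_of_pos hn0, ← hLdef]
    congr 1
    have : L * (-(τ - 1) + C * L ^ (γ - 1)) = (2 - τ) * L + C * (L ^ (γ - 1) * L) - L := by ring
    rw [this, hLγid]
  have hn1 : (1 : ℝ) ≤ (n : ℝ) := by linarith
  have hFnup : 0 ≤ 1 - F (n : ℝ) := by
    rw [htFn]; exact tsum_nonneg fun k => hf_nonneg _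
  have hup1 : ((n : ℝ) + 1) * (1 - F (n : ℝ)) ≤ 2 * Real.exp ((2 - τ) * L + C * L ^ γ) := by
    have ha : ((n : ℝ) + 1) * (1 - F (n : ℝ))
        ≤ (2 * (n : ℝ)) * ((n : ℝ) ^ (-(τ - 1) + C * L ^ (γ - 1))) :=
      mul_le_mul (by linarith) hFn.2 hFnup (by linarith)
    calc ((n : ℝ) + 1) * (1 - F (n : ℝ))
        ≤ (2 * (n : ℝ)) * ((n : ℝ) ^ (-(τ - 1) + C * L ^ (γ - 1))) := ha
      _ = 2 * Real.exp ((2 - τ) * L + C * L ^ γ) := by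
          rw [hrwn2, hneu, mul_assoc, ← Real.exp_add]
          congr 2
          ring
  have hLbup : Lb ≤ (1 / δ) * Real.exp ((2 - τ) * L + C * L ^ γ) := by
    rw [hLbdef]
    have h1 : (n : ℝ) ^ (1 - β) = Real.exp ((2 - τ) * L + C * L ^ γ) := by
      rw [Real.rpow_def_of_pos hn0, ← hLdef, hβdef]
      congr 1
      have hh : L * (1 - ((τ - 1) - C * L ^ (γ - 1)))
          = (2 - τ) * L + C * (L ^ (γ - 1) * L) := by ring
      rw [hh, hLγid]
    rw [h1, div_eq_mul_inv, mul_comm, one_div]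
  have hTup2 : T ≤ A * Real.exp ((2 - τ) * L + C * L ^ γ) := by
    have hsplitA : A * Real.exp ((2 - τ) * L + C * L ^ γ)
        = 2 * Real.exp ((2 - τ) * L + C * L ^ γ)
          + (1 / δ) * Real.exp ((2 - τ) * L + C * L ^ γ) := by
      rw [hAdef]; ring
    rw [hsplitA]
    linarith [hTup, hup1, hLbup]
  have hGup : 1 - G x ≤ T := by
    rw [hGx]
    exact div_le_self hT0 hμ1
  have hrhs : x ^ (2 - τ + K * u ^ (γ - 1)) = Real.exp ((2 - τ) * u + K * u ^ γ) := by
    rw [Real.rpow_def_of_pos hx0, ← hudef]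
    congr 1
    have hh : u * (2 - τ + K * u ^ (γ - 1)) = (2 - τ) * u + K * (u ^ (γ - 1) * u) := by ring
    rw [hh, huγid]
  have e5 : (τ - 2) * u ≤ (τ - 2) * L := mul_le_mul_of_nonneg_left huL (by linarith)
  have hlin2 : Real.log A + ((2 - τ) * L + C * L ^ γ) ≤ (2 - τ) * u + K * u ^ γ := by
    linarith [e2, e3, e5, hK2C, hlogμ0]
  have hupper : 1 - G x ≤ x ^ (2 - τ + K * u ^ (γ - 1)) := by
    calc 1 - G x ≤ T := hGup
      _ ≤ A * Real.exp ((2 - τ) * L + C * L ^ γ) := hTup2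
      _ = Real.exp (Real.log A + ((2 - τ) * L + C * L ^ γ)) := by
          rw [Real.exp_add (Real.log A) ((2 - τ) * L + C * L ^ γ), Real.exp_log hA0]
      _ ≤ Real.exp ((2 - τ) * u + K * u ^ γ) := Real.exp_le_exp.2 hlin2
      _ = x ^ (2 - τ + K * u ^ (γ - 1)) := hrhs.symm
  exact ⟨hlower, hupper⟩
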